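/- arXiv:2212.10643 — 2 statements merged into one kernel-verified Lean document; each statement's English description precedes it below -/
import Mathlib

section
/- Let G be a simple graph with maximum degree at most 4 and let φ be a proper coloring of G. Then φ is a proper coloring of the square G² (i.e., φ assigns distinct colors to any two distinct vertices at distance at most 2 in G) if and only if φ is a 3-PCF coloring of G, i.e., for every vertex v at least min{3, d_G(v)} colors appear on exactly one neighbor of v. -/
/-- An `h`-PCF coloring of `G`: a proper coloring `φ` such that for every vertex `v`,
at least `min h (d_G(v))` colors appear on exactly one neighbor of `v`. -/
def SimpleGraph.IsPCFColoring {V α : Type*} (G : SimpleGraph V) (h : ℕ)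
    (φ : V → α) : Prop :=
  (∀ ⦃u w : V⦄, G.Adj u w → φ u ≠ φ w) ∧
  ∀ v : V, min h {u | G.Adj v u}.ncard ≤
    {c : α | {u | G.Adj v u ∧ φ u = c}.ncard = 1}.ncard

/-- `G` admits an `h`-PCF `k`-coloring. -/
def SimpleGraph.HasPCFColoring {V : Type*} (G : SimpleGraph V) (h k : ℕ) : Prop :=
  ∃ φ : V → Fin k, G.IsPCFColoring h φ

/-- The `S`-reduced graph `G*S`: delete `S`, and join two distinct nonadjacent
vertices outside `S` that have a common neighbor in `S` (vertices of `S`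
remain as isolated vertices). -/
def SimpleGraph.reduce {V : Type*} (G : SimpleGraph V) (S : Set V) :
    SimpleGraph V where
  Adj u w := u ∉ S ∧ w ∉ S ∧ u ≠ w ∧
    (G.Adj u w ∨ ∃ s ∈ S, G.Adj u s ∧ G.Adj s w)
  symm := by
    refine ⟨?_⟩
    rintro u w ⟨hu, hw, hne, h | ⟨s, hs, h1, h2⟩⟩
    · exact ⟨hw, hu, hne.symm, Or.inl h.symm⟩
    · exact ⟨hw, hu, hne.symm, Or.inr ⟨s, hs, h2.symm, h1.symm⟩⟩
  loopless := ⟨fun u h => h.2.2.1 rfl⟩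

theorem square_coloring_iff_three_pcf {V α : Type*} [Fintype V]
    (G : SimpleGraph V) (φ : V → α)
    (hΔ : ∀ v : V, {u | G.Adj v u}.ncard ≤ 4)
    (hproper : ∀ ⦃u w : V⦄, G.Adj u w → φ u ≠ φ w) :
    (∀ u w : V, u ≠ w → (G.Adj u w ∨ ∃ x : V, G.Adj u x ∧ G.Adj x w) →
      φ u ≠ φ w) ↔ G.IsPCFColoring 3 φ := by
  constructor
  · intro hsq
    refine ⟨hproper, fun v => ?_⟩
    have inj : Set.InjOn φ {u | G.Adj v u} := by
      intro a ha b hb hab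
      by_contra hne
      exact hsq a b hne (Or.inr ⟨v, ha.symm, hb⟩) hab
    have hset : {c : α | {u | G.Adj v u ∧ φ u = c}.ncard = 1}
        = φ '' {u | G.Adj v u} := by
      ext c
      constructor
      · intro hc
        obtain ⟨a, ha⟩ := Set.ncard_eq_one.mp hc
        have : a ∈ {u | G.Adj v u ∧ φ u = c} := ha ▸ rfl
        exact ⟨a, this.1, this.2⟩
      · rintro ⟨a, ha, rfl⟩
        apply Set.ncard_eq_one.mpr ⟨a, ?_⟩
        ext z
        simp only [Set.mem_setOf_eq, Set.mem_singleton_iff]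
        constructor
        · rintro ⟨hz, hz2⟩
          exact inj hz ha hz2
        · rintro rfl
          exact ⟨ha, rfl⟩
    rw [hset, Set.ncard_image_of_injOn inj]
    exact min_le_right _ _
  · rintro ⟨-, hpcf⟩ u w hne hconn heq
    rcases hconn with hadj | ⟨x, hux, hxw⟩
    · exact hproper hadj heq
    · have hu : u ∈ {z | G.Adj x z} := hux.symm
      have hw : w ∈ {z | G.Adj x z} := hxw
      set N := {z | G.Adj x z} with hN
      have hfin : N.Finite := Set.toFinite _
      have hsub : ({u, w} : Set V) ⊆ N := by
        rintro z (rfl | rfl) <;> assumption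
      have hd2 : 2 ≤ N.ncard := by
        calc 2 = ({u, w} : Set V).ncard := (Set.ncard_pair hne).symm
        _ ≤ N.ncard := Set.ncard_le_ncard hsub hfin
      -- every unique color comes from a neighbor other than u, w
      have hUsub : {c : α | {z | G.Adj x z ∧ φ z = c}.ncard = 1}
          ⊆ φ '' (N \ {u, w}) := by
        intro c hc
        obtain ⟨a, ha⟩ := Set.ncard_eq_one.mp hc
        have haN : a ∈ {z | G.Adj x z ∧ φ z = c} := ha ▸ rfl
        refine ⟨a, ⟨haN.1, ?_⟩, haN.2⟩
        rintro (rfl | rfl)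
        · -- a = u : then w is also in the class, contradicting singleton
          have : w ∈ {z | G.Adj x z ∧ φ z = c} := ⟨hxw, heq ▸ haN.2⟩
          rw [ha, Set.mem_singleton_iff] at this
          exact hne this.symm
        · have : u ∈ {z | G.Adj x z ∧ φ z = c} := ⟨hux.symm, heq ▸ haN.2⟩
          rw [ha, Set.mem_singleton_iff] at this
          exact hne this
      have hle : {c : α | {z | G.Adj x z ∧ φ z = c}.ncard = 1}.ncard
          ≤ N.ncard - 2 := by
        calc {c : α | {z | G.Adj x z ∧ φ z = c}.ncard = 1}.ncard
            ≤ (φ '' (N \ {u, w})).ncard :=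
              Set.ncard_le_ncard hUsub ((hfin.diff).image φ)
          _ ≤ (N \ {u, w}).ncard := Set.ncard_image_le (hfin.diff)
          _ = N.ncard - ({u, w} : Set V).ncard := Set.ncard_diff hsub
          _ = N.ncard - 2 := by rw [Set.ncard_pair hne]
      have := hpcf x
      have hd4 := hΔ x
      rw [← hN] at this hd4
      omega
end

section
/- Let G be a simple graph with maximum degree at most 4 containing pairwise adjacent vertices x, y, z, each of degree exactly 4, whose neighbors outside the triangle are x₁, x₂ (neighbors of x), y₁, y₂ (neighbors of y), z₁, z₂ (neighbors of z), and suppose x₁, x₂, y₁, y₂, z₁, z₂ are six pairwise distinct vertices not in {x, y, z}. Set S = {x, y, z}. If the S-reduced graph G*S admits a 2-PCF 9-coloring, then G admits a 2-PCF 9-coloring. (This shows a vertex-minimum counterexample has no 3-cycle.) -/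
namespace PCFtmp



variable {V : Type*}

/-- number of elements of `T` with color `c`. -/
noncomputable def cnt (f : V → Fin 9) (T : Set V) (c : Fin 9) : ℕ := {u | u ∈ T ∧ f u = c}.ncard

/-- colors appearing exactly once on `T`. -/
def uq (f : V → Fin 9) (T : Set V) : Set (Fin 9) := {c | cnt f T c = 1}

lemma pick9 (F : Set (Fin 9)) (h : F.ncard ≤ 8) : ∃ a, a ∉ F := by
  by_contra hc
  push_neg at hc
  have he : F = Set.univ := Set.eq_univ_of_forall hc
  rw [he, Set.ncard_univ, Nat.card_eq_fintype_card, Fintype.card_fin] at h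
  omega

lemma cnt_congr {f g : V → Fin 9} {T : Set V} (h : ∀ u ∈ T, f u = g u) (c : Fin 9) :
    cnt f T c = cnt g T c := by
  unfold cnt; congr 1; ext u
  simp only [Set.mem_setOf_eq, and_congr_right_iff]
  intro hu; rw [h u hu]

lemma cnt_insert_ne {f : V → Fin 9} {T : Set V} {s : V} {c : Fin 9} (h : f s ≠ c) :
    cnt f (insert s T) c = cnt f T c := by
  unfold cnt; congr 1; ext u
  simp only [Set.mem_setOf_eq, Set.mem_insert_iff]
  constructor
  · rintro ⟨rfl | hu, hc⟩
    · exact absurd hc h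
    · exact ⟨hu, hc⟩
  · rintro ⟨hu, hc⟩; exact ⟨Or.inr hu, hc⟩

lemma cnt_insert_self [Finite V] {f : V → Fin 9} {T : Set V} {s : V} {c : Fin 9}
    (hs : s ∉ T) (hc : f s = c) : cnt f (insert s T) c = cnt f T c + 1 := by
  unfold cnt
  have he : {u | u ∈ insert s T ∧ f u = c} = insert s {u | u ∈ T ∧ f u = c} := by
    ext u
    simp only [Set.mem_setOf_eq, Set.mem_insert_iff]
    constructor
    · rintro ⟨rfl | hu, h2⟩
      · exact Or.inl rfl
      · exact Or.inr ⟨hu, h2⟩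
    · rintro (rfl | ⟨hu, h2⟩)
      · exact ⟨Or.inl rfl, hc⟩
      · exact ⟨Or.inr hu, h2⟩
  rw [he, Set.ncard_insert_of_notMem (fun h => hs h.1) (Set.toFinite _)]

lemma cnt_zero {f : V → Fin 9} {T : Set V} {c : Fin 9} (h : c ∉ f '' T) : cnt f T c = 0 := by
  unfold cnt
  convert Set.ncard_empty V
  ext u
  simp only [Set.mem_setOf_eq, Set.mem_empty_iff_false, iff_false, not_and]
  intro hu hc
  exact h ⟨u, hu, hc⟩

lemma mem_image_of_cnt {f : V → Fin 9} {T : Set V} {c : Fin 9} (h : cnt f T c = 1) :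
    c ∈ f '' T := by
  have hne : {u | u ∈ T ∧ f u = c}.Nonempty := by
    apply Set.nonempty_of_ncard_ne_zero
    unfold cnt at h; omega
  obtain ⟨u, hu, hc⟩ := hne
  exact ⟨u, hu, hc⟩

lemma cnt_eq_one_of {f : V → Fin 9} {T : Set V} {c : Fin 9} (u0 : V) (h0 : u0 ∈ T)
    (hc : f u0 = c) (huniq : ∀ u ∈ T, f u = c → u = u0) : cnt f T c = 1 := by
  unfold cnt
  have he : {u | u ∈ T ∧ f u = c} = {u0} := by
    ext u
    simp only [Set.mem_setOf_eq, Set.mem_singleton_iff]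
    constructor
    · rintro ⟨hu, hfc⟩; exact huniq u hu hfc
    · rintro rfl; exact ⟨h0, hc⟩
  rw [he, Set.ncard_singleton]

lemma two_le_uq {f : V → Fin 9} {T : Set V} {c1 c2 : Fin 9} (h1 : c1 ∈ uq f T)
    (h2 : c2 ∈ uq f T) (hne : c1 ≠ c2) : 2 ≤ (uq f T).ncard := by
  have hp : ({c1, c2} : Set (Fin 9)).ncard = 2 := Set.ncard_pair hne
  rw [← hp]
  refine Set.ncard_le_ncard ?_ (Set.toFinite _)
  intro c hc
  rcases hc with rfl | hc
  · exact h1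
  · rw [Set.mem_singleton_iff] at hc; subst hc; exact h2

lemma one_le_uq {f : V → Fin 9} {T : Set V} {c1 : Fin 9} (h1 : c1 ∈ uq f T) :
    1 ≤ (uq f T).ncard :=
  (Set.ncard_pos (Set.toFinite _)).mpr ⟨c1, h1⟩

lemma exists_pair_of_two_le {S : Set (Fin 9)} (h : 2 ≤ S.ncard) :
    ∃ c1 c2, c1 ∈ S ∧ c2 ∈ S ∧ c1 ≠ c2 :=
  (Set.one_lt_ncard_iff (Set.toFinite _)).mp (by omega)

lemma pair_ncard_le_two (p q : Fin 9) : ({p, q} : Set (Fin 9)).ncard ≤ 2 :=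
  le_trans (Set.ncard_insert_le _ _) (by rw [Set.ncard_singleton])

lemma uq_setOf (f : V → Fin 9) (P : V → Prop) (T : Set V) (hT : {u | P u} = T) :
    {c : Fin 9 | {u | P u ∧ f u = c}.ncard = 1} = uq f T := by
  subst hT; rfl

lemma ncard_univ9 : (Set.univ : Set (Fin 9)).ncard = 9 := by
  rw [Set.ncard_univ, Nat.card_eq_fintype_card, Fintype.card_fin]

lemma sel (A B C P Q R : Set (Fin 9)) (hA : A.ncard ≤ 6) (hB : B.ncard ≤ 6) (hC : C.ncard ≤ 6)
    (hP : P.ncard ≤ 2) (hQ : Q.ncard ≤ 2) (hR : R.ncard ≤ 2) (hRC : R ⊆ C) :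
    ∃ a b c : Fin 9, a ∉ A ∧ b ∉ B ∧ c ∉ C ∧ a ≠ b ∧ a ≠ c ∧ b ≠ c ∧
      ¬(b ∈ P ∧ c ∈ P) ∧ ¬(a ∈ Q ∧ c ∈ Q) ∧ ¬(a ∈ R ∧ b ∈ R) := by
  -- choose c₀
  obtain ⟨c₀, hc₀⟩ := pick9 (C ∪ Q)
    (le_trans (Set.ncard_union_le _ _) (by omega))
  have hc₀C : c₀ ∉ C := fun h => hc₀ (Or.inl h)
  have hc₀Q : c₀ ∉ Q := fun h => hc₀ (Or.inr h)
  have hc₀R : c₀ ∉ R := fun h => hc₀C (hRC h)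
  -- choose b₀
  obtain ⟨b₀, hb₀B, hb₀c₀, hKP⟩ :
      ∃ b₀, b₀ ∉ B ∧ b₀ ≠ c₀ ∧ ¬(b₀ ∈ P ∧ c₀ ∈ P) := by
    by_cases hc₀P : c₀ ∈ P
    · obtain ⟨b₀, hb₀⟩ := pick9 (B ∪ P) (le_trans (Set.ncard_union_le _ _) (by omega))
      have hbB : b₀ ∉ B := fun h => hb₀ (Or.inl h)
      have hbP : b₀ ∉ P := fun h => hb₀ (Or.inr h)
      exact ⟨b₀, hbB, fun h => hbP (h ▸ hc₀P), fun h => hbP h.1⟩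
    · obtain ⟨b₀, hb₀⟩ := pick9 (B ∪ {c₀})
        (le_trans (Set.ncard_union_le _ _) (by
          have := Set.ncard_singleton c₀; omega))
      exact ⟨b₀, fun h => hb₀ (Or.inl h), fun h => hb₀ (Or.inr h),
        fun h => hc₀P h.2⟩
  by_cases hb₀R : b₀ ∈ R
  · -- hard branch
    by_cases hex : ∃ a, a ∉ A ∪ {b₀, c₀} ∪ R
    · obtain ⟨a, ha⟩ := hex
      have haA : a ∉ A := fun h => ha (Or.inl (Or.inl h))
      have hab : a ≠ b₀ := fun h => ha (Or.inl (Or.inr (Or.inl h)))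
      have hac : a ≠ c₀ := fun h => ha (Or.inl (Or.inr (Or.inr h)))
      have haR : a ∉ R := fun h => ha (Or.inr h)
      exact ⟨a, b₀, c₀, haA, hb₀B, hc₀C, hab, hac, hb₀c₀, hKP,
        fun h => hc₀Q h.2, fun h => haR h.1⟩
    · push_neg at hex
      have huniv1 : A ∪ {b₀, c₀} ∪ R = Set.univ := Set.eq_univ_of_forall hex
      have hc₀A : c₀ ∉ A := by
        intro hc₀A
        have hsub : (Set.univ : Set (Fin 9)) ⊆ A ∪ R := by
          intro u _
          have hu : u ∈ A ∪ {b₀, c₀} ∪ R := huniv1 ▸ Set.mem_univ u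
          rcases hu with (hu | hu) | hu
          · exact Or.inl hu
          · rcases hu with rfl | hu
            · exact Or.inr hb₀R
            · rw [Set.mem_singleton_iff] at hu; subst hu; exact Or.inl hc₀A
          · exact Or.inr hu
        have h9 := Set.ncard_le_ncard hsub (Set.toFinite (A ∪ R))
        rw [ncard_univ9] at h9
        have := Set.ncard_union_le A R
        omega
      by_cases hex2 : ∃ c₁, c₁ ∉ C ∪ {c₀} ∪ P
      · obtain ⟨c₁, hc₁⟩ := hex2
        have hc₁C : c₁ ∉ C := fun h => hc₁ (Or.inl (Or.inl h))
        have hc₁c₀ : c₁ ≠ c₀ := fun h => hc₁ (Or.inl (Or.inr h))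
        have hc₁P : c₁ ∉ P := fun h => hc₁ (Or.inr h)
        obtain ⟨b₁, hb₁⟩ := pick9 (B ∪ {c₀, c₁})
          (le_trans (Set.ncard_union_le _ _) (by
            have := Set.ncard_insert_le c₀ ({c₁} : Set (Fin 9))
            have := Set.ncard_singleton c₁; omega))
        have hb₁B : b₁ ∉ B := fun h => hb₁ (Or.inl h)
        have hb₁c₀ : b₁ ≠ c₀ := fun h => hb₁ (Or.inr (Or.inl h))
        have hb₁c₁ : b₁ ≠ c₁ := fun h => hb₁ (Or.inr (Or.inr h))
        exact ⟨c₀, b₁, c₁, hc₀A, hb₁B, hc₁C, fun h => hb₁c₀ h.symm, fun h => hc₁c₀ h.symm,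
          hb₁c₁, fun h => hc₁P h.2, fun h => hc₀Q h.1, fun h => hc₀R h.1⟩
      · push_neg at hex2
        have huniv2 : C ∪ {c₀} ∪ P = Set.univ := Set.eq_univ_of_forall hex2
        obtain ⟨t, ht⟩ := pick9 (C ∪ {c₀})
          (le_trans (Set.ncard_union_le _ _) (by have := Set.ncard_singleton c₀; omega))
        have htC : t ∉ C := fun h => ht (Or.inl h)
        have htc₀ : t ≠ c₀ := fun h => ht (Or.inr h)
        have htP : t ∈ P := by
          have hu : t ∈ C ∪ {c₀} ∪ P := huniv2 ▸ Set.mem_univ t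
          rcases hu with hu | hu
          · exact absurd hu ht
          · exact hu
        by_cases hex3 : ∃ b₁, b₁ ∉ B ∪ {c₀} ∪ P
        · obtain ⟨b₁, hb₁⟩ := hex3
          have hb₁B : b₁ ∉ B := fun h => hb₁ (Or.inl (Or.inl h))
          have hb₁c₀ : b₁ ≠ c₀ := fun h => hb₁ (Or.inl (Or.inr h))
          have hb₁P : b₁ ∉ P := fun h => hb₁ (Or.inr h)
          exact ⟨c₀, b₁, t, hc₀A, hb₁B, htC, fun h => hb₁c₀ h.symm, fun h => htc₀ h.symm,
            fun h => hb₁P (h ▸ htP), fun h => hb₁P h.1, fun h => hc₀Q h.1,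
            fun h => hc₀R h.1⟩
        · push_neg at hex3
          have huniv3 : B ∪ {c₀} ∪ P = Set.univ := Set.eq_univ_of_forall hex3
          exfalso
          have hb₀P : b₀ ∈ P := by
            have hu : b₀ ∈ B ∪ {c₀} ∪ P := huniv3 ▸ Set.mem_univ b₀
            rcases hu with (hu | hu) | hu
            · exact absurd hu hb₀B
            · exact absurd hu hb₀c₀
            · exact hu
          have hb₀C : b₀ ∈ C := hRC hb₀R
          have hsub : (Set.univ : Set (Fin 9)) ⊆ C ∪ {c₀} ∪ (P \ {b₀}) := by
            intro u _
            have hu : u ∈ C ∪ {c₀} ∪ P := huniv2 ▸ Set.mem_univ u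
            rcases hu with hu | hu
            · exact Or.inl hu
            · by_cases hub : u = b₀
              · subst hub; exact Or.inl (Or.inl hb₀C)
              · exact Or.inr ⟨hu, hub⟩
          have h9 := Set.ncard_le_ncard hsub (Set.toFinite (C ∪ {c₀} ∪ (P \ {b₀})))
          rw [ncard_univ9] at h9
          have h1 := Set.ncard_union_le (C ∪ {c₀}) (P \ {b₀})
          have h2 := Set.ncard_union_le C ({c₀} : Set (Fin 9))
          have h3 : (P \ {b₀}).ncard < P.ncard :=
            Set.ncard_diff_singleton_lt_of_mem hb₀P (Set.toFinite _)
          have h4 := Set.ncard_singleton c₀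
          omega
  · -- easy branch
    obtain ⟨a, ha⟩ := pick9 (A ∪ {b₀, c₀})
      (le_trans (Set.ncard_union_le _ _) (by
        have := Set.ncard_insert_le b₀ ({c₀} : Set (Fin 9))
        have := Set.ncard_singleton c₀; omega))
    have haA : a ∉ A := fun h => ha (Or.inl h)
    have hab : a ≠ b₀ := fun h => ha (Or.inr (Or.inl h))
    have hac : a ≠ c₀ := fun h => ha (Or.inr (Or.inr h))
    exact ⟨a, b₀, c₀, haA, hb₀B, hc₀C, hab, hac, hb₀c₀, hKP,
      fun h => hc₀Q h.2, fun h => hb₀R h.2⟩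

lemma four_uniq (f : V → Fin 9) (w1 w2 w3 w4 : V)
    (h12 : w1 ≠ w2) (h13 : w1 ≠ w3) (h14 : w1 ≠ w4)
    (h23 : w2 ≠ w3) (h24 : w2 ≠ w4) (h34 : w3 ≠ w4)
    (hab : f w1 ≠ f w2) (hpq : f w3 ≠ f w4)
    (hK : ¬((f w1 = f w3 ∨ f w1 = f w4) ∧ (f w2 = f w3 ∨ f w2 = f w4))) :
    2 ≤ (uq f ({w1, w2, w3, w4} : Set V)).ncard := by
  have hm1 : w1 ∈ ({w1, w2, w3, w4} : Set V) := Or.inl rfl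
  have hm2 : w2 ∈ ({w1, w2, w3, w4} : Set V) := Or.inr (Or.inl rfl)
  have hm3 : w3 ∈ ({w1, w2, w3, w4} : Set V) := Or.inr (Or.inr (Or.inl rfl))
  have hm4 : w4 ∈ ({w1, w2, w3, w4} : Set V) := Or.inr (Or.inr (Or.inr rfl))
  have hcase : ∀ u ∈ ({w1, w2, w3, w4} : Set V), u = w1 ∨ u = w2 ∨ u = w3 ∨ u = w4 := by
    intro u hu
    simpa using hu
  have mk : ∀ (w : V), w ∈ ({w1, w2, w3, w4} : Set V) →
      (w1 = w ∨ f w1 ≠ f w) → (w2 = w ∨ f w2 ≠ f w) → (w3 = w ∨ f w3 ≠ f w) →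
      (w4 = w ∨ f w4 ≠ f w) → f w ∈ uq f ({w1, w2, w3, w4} : Set V) := by
    intro w hw e1 e2 e3 e4
    refine cnt_eq_one_of w hw rfl ?_
    intro u hu hfu
    rcases hcase u hu with rfl | rfl | rfl | rfl
    · rcases e1 with h | h
      · exact h
      · exact absurd hfu h
    · rcases e2 with h | h
      · exact h
      · exact absurd hfu h
    · rcases e3 with h | h
      · exact h
      · exact absurd hfu h
    · rcases e4 with h | h
      · exact h
      · exact absurd hfu h
  by_cases h1 : f w1 = f w3
  · have hn2 : ¬(f w2 = f w3 ∨ f w2 = f w4) := fun h => hK ⟨Or.inl h1, h⟩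
    push_neg at hn2
    refine two_le_uq (mk w2 hm2 (Or.inr hab) (Or.inl rfl)
      (Or.inr (fun h => hn2.1 h.symm)) (Or.inr (fun h => hn2.2 h.symm)))
      (mk w4 hm4 (Or.inr (fun h => hpq (h1.symm.trans h))) (Or.inr hn2.2)
      (Or.inr hpq) (Or.inl rfl)) hn2.2
  · by_cases h2 : f w1 = f w4
    · have hn2 : ¬(f w2 = f w3 ∨ f w2 = f w4) := fun h => hK ⟨Or.inr h2, h⟩
      push_neg at hn2
      refine two_le_uq (mk w2 hm2 (Or.inr hab) (Or.inl rfl)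
        (Or.inr (fun h => hn2.1 h.symm)) (Or.inr (fun h => hn2.2 h.symm)))
        (mk w3 hm3 (Or.inr (fun h => hpq (h.symm.trans h2))) (Or.inr hn2.1)
        (Or.inl rfl) (Or.inr (fun h => hpq h.symm))) hn2.1
    · by_cases h3 : f w2 = f w3
      · refine two_le_uq (mk w1 hm1 (Or.inl rfl) (Or.inr (fun h => hab h.symm))
          (Or.inr (fun h => h1 h.symm)) (Or.inr (fun h => h2 h.symm)))
          (mk w4 hm4 (Or.inr h2) (Or.inr (fun h => hpq (h3.symm.trans h)))
          (Or.inr hpq) (Or.inl rfl)) h2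
      · by_cases h4 : f w2 = f w4
        · refine two_le_uq (mk w1 hm1 (Or.inl rfl) (Or.inr (fun h => hab h.symm))
            (Or.inr (fun h => h1 h.symm)) (Or.inr (fun h => h2 h.symm)))
            (mk w3 hm3 (Or.inr h1) (Or.inr h3) (Or.inl rfl)
            (Or.inr (fun h => hpq h.symm))) h1
        · refine two_le_uq (mk w1 hm1 (Or.inl rfl) (Or.inr (fun h => hab h.symm))
            (Or.inr (fun h => h1 h.symm)) (Or.inr (fun h => h2 h.symm)))
            (mk w2 hm2 (Or.inr hab) (Or.inl rfl) (Or.inr (fun h => h3 h.symm))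
            (Or.inr (fun h => h4 h.symm))) hab


lemma UA_from_star [Finite V] (f : V → Fin 9) (N' : Set V) (t : V)
    (h2 : 2 ≤ (uq f (insert t N')).ncard) : (uq f N').Nonempty := by
  obtain ⟨c1, c2, hc1, hc2, hne⟩ := exists_pair_of_two_le h2
  have key : ∀ c, c ∈ uq f (insert t N') → f t ≠ c → c ∈ uq f N' := by
    intro c hc hfc
    have := cnt_insert_ne (T := N') hfc
    exact Set.mem_setOf_eq ▸ (this ▸ hc)
  by_cases h : f t = c1
  · exact ⟨c2, key c2 hc2 (fun hh => hne (h.symm.trans hh))⟩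
  · exact ⟨c1, key c1 hc1 h⟩

lemma pendant_ok [Finite V] (f ψ : V → Fin 9) (N' : Set V) (s : V) (a : Fin 9)
    (hsN : s ∉ N')
    (hagree : ∀ u ∈ N', ψ u = f u) (hψs : ψ s = a)
    (hUA : N'.Nonempty → (uq f N').Nonempty)
    (ha : a ∉ (if 3 ≤ (uq f N').ncard then (∅ : Set (Fin 9)) else f '' N')) :
    min 2 (insert s N').ncard ≤ (uq ψ (insert s N')).ncard := by
  have hkey : ∀ c, c ≠ a → c ∈ uq f N' → c ∈ uq ψ (insert s N') := by
    intro c hca hc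
    have h1 : cnt ψ (insert s N') c = cnt ψ N' c := cnt_insert_ne (hψs ▸ fun h => hca h.symm)
    have h2 : cnt ψ N' c = cnt f N' c := cnt_congr hagree c
    show cnt ψ (insert s N') c = 1
    rw [h1, h2]; exact hc
  rcases N'.eq_empty_or_nonempty with rfl | hne
  · have h1 : (insert s (∅ : Set V)).ncard = 1 := by simp
    rw [h1]
    have : a ∈ uq ψ (insert s ∅) := by
      show cnt ψ (insert s ∅) a = 1
      refine cnt_eq_one_of s (Or.inl rfl) hψs ?_
      intro u hu _
      rcases hu with rfl | hu
      · rfl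
      · exact absurd hu (Set.notMem_empty u)
    calc min 2 1 ≤ 1 := min_le_right _ _
    _ ≤ _ := one_le_uq this
  · refine le_trans (min_le_left _ _) ?_
    by_cases h3 : 3 ≤ (uq f N').ncard
    · have hdiff : 2 ≤ ((uq f N') \ {a}).ncard := by
        have hsub : uq f N' ⊆ insert a ((uq f N') \ {a}) := by
          intro c hc
          by_cases hca : c = a
          · exact Or.inl hca
          · exact Or.inr ⟨hc, hca⟩
        have := Set.ncard_le_ncard hsub (Set.toFinite _)
        have := Set.ncard_insert_le a ((uq f N') \ {a})
        omega
      obtain ⟨c1, c2, hc1, hc2, hne12⟩ := exists_pair_of_two_le hdiff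
      exact two_le_uq (hkey c1 hc1.2 hc1.1) (hkey c2 hc2.2 hc2.1) hne12
    · rw [if_neg h3] at ha
      obtain ⟨c1, hc1⟩ := hUA hne
      have hc1a : c1 ≠ a := by
        intro hh
        exact ha (hh ▸ mem_image_of_cnt hc1)
      have haq : a ∈ uq ψ (insert s N') := by
        show cnt ψ (insert s N') a = 1
        rw [cnt_insert_self hsN hψs, cnt_congr hagree a, cnt_zero ha]
      exact two_le_uq (hkey c1 hc1a hc1) haq hc1a

lemma reduce_nbhd' (G : SimpleGraph V) (S : Set V) (s w w' : V)
    (hsS : s ∈ S) (hsw : G.Adj s w) (hsw' : G.Adj s w')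
    (hNs : ∀ u, G.Adj s u → u ∈ S ∨ u = w ∨ u = w')
    (hwS : w ∉ S) (hw'S : w' ∉ S) (hww' : w ≠ w')
    (hwOnly : ∀ t ∈ S, G.Adj w t → t = s) :
    {u | (G.reduce S).Adj w u} = insert w' ({u | G.Adj w u} \ {s}) := by
  ext u
  simp only [Set.mem_setOf_eq, Set.mem_insert_iff, Set.mem_diff, Set.mem_singleton_iff]
  constructor
  · rintro ⟨hw, hu, hne, hadj | ⟨t, ht, h1, h2⟩⟩
    · exact Or.inr ⟨hadj, fun hh => hu (hh ▸ hsS)⟩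
    · have hts : t = s := hwOnly t ht h1
      subst hts
      rcases hNs u h2 with h | h | h
      · exact absurd h hu
      · exact absurd h.symm hne
      · exact Or.inl h
  · rintro (rfl | ⟨hadj, hne⟩)
    · exact ⟨hwS, hw'S, hww', Or.inr ⟨s, hsS, hsw.symm, hsw'⟩⟩
    · have huS : u ∉ S := fun hh => hne (hwOnly u hh hadj)
      exact ⟨hwS, huS, G.ne_of_adj hadj, Or.inl hadj⟩

lemma reduce_nbhd_far (G : SimpleGraph V) (S : Set V) (v : V) (hvS : v ∉ S)
    (hfar : ∀ t ∈ S, ¬ G.Adj v t) :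
    {u | (G.reduce S).Adj v u} = {u | G.Adj v u} := by
  ext u
  simp only [Set.mem_setOf_eq]
  constructor
  · rintro ⟨_, _, _, hadj | ⟨t, ht, h1, _⟩⟩
    · exact hadj
    · exact absurd h1 (hfar t ht)
  · intro hadj
    have huS : u ∉ S := fun hh => hfar u hh hadj
    exact ⟨hvS, huS, G.ne_of_adj hadj, Or.inl hadj⟩

lemma bad_card_le [Finite V] (φ : V → Fin 9) (N' : Set V) (h3 : N'.ncard ≤ 3) :
    (if 3 ≤ (uq φ N').ncard then (∅ : Set (Fin 9)) else φ '' N').ncard ≤ 2 := by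
  split_ifs with h
  · simp
  · by_contra hc
    push_neg at hc
    have himg : (φ '' N').ncard ≤ N'.ncard := Set.ncard_image_le (Set.toFinite _)
    have heq : (φ '' N').ncard = N'.ncard := by omega
    have hinj : Set.InjOn φ N' := Set.injOn_of_ncard_image_eq heq (Set.toFinite _)
    have hsub : φ '' N' ⊆ uq φ N' := by
      rintro c ⟨u, hu, rfl⟩
      exact cnt_eq_one_of u hu rfl (fun v hv hfv => hinj hv hu hfv)
    have := Set.ncard_le_ncard hsub (Set.toFinite _)
    omega

lemma pendant_main [Finite V] (G : SimpleGraph V) (S : Set V) (φ ψ : V → Fin 9)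
    (s w w' : V) (a : Fin 9)
    (hsS : s ∈ S) (hsw : G.Adj s w) (hsw' : G.Adj s w')
    (hNs : ∀ u, G.Adj s u → u ∈ S ∨ u = w ∨ u = w')
    (hwS : w ∉ S) (hw'S : w' ∉ S) (hww' : w ≠ w')
    (hwOnly : ∀ t ∈ S, G.Adj w t → t = s)
    (hpcf : min 2 {u | (G.reduce S).Adj w u}.ncard ≤
      {c : Fin 9 | {u | (G.reduce S).Adj w u ∧ φ u = c}.ncard = 1}.ncard)
    (hψs : ψ s = a)
    (hagree : ∀ u, u ∉ S → ψ u = φ u)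
    (ha : a ∉ (if 3 ≤ (uq φ ({u | G.Adj w u} \ {s})).ncard then (∅ : Set (Fin 9))
        else φ '' ({u | G.Adj w u} \ {s}))) :
    min 2 {u | G.Adj w u}.ncard ≤
      {c : Fin 9 | {u | G.Adj w u ∧ ψ u = c}.ncard = 1}.ncard := by
  set N' : Set V := {u | G.Adj w u} \ {s} with hN'
  have hsN : s ∉ N' := fun h => h.2 rfl
  have hNw : {u | G.Adj w u} = insert s N' := by
    have h1 : insert s N' = {u | G.Adj w u} := by
      rw [hN', Set.insert_diff_singleton]
      exact Set.insert_eq_self.mpr (show G.Adj w s from hsw.symm)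
    exact h1.symm
  have hstar : {u | (G.reduce S).Adj w u} = insert w' N' :=
    reduce_nbhd' G S s w w' hsS hsw hsw' hNs hwS hw'S hww' hwOnly
  have hagreeN : ∀ u ∈ N', ψ u = φ u := by
    intro u hu
    have huS : u ∉ S := fun hh => hu.2 (hwOnly u hh hu.1)
    exact hagree u huS
  have hUA : N'.Nonempty → (uq φ N').Nonempty := by
    intro hne
    rw [hstar, uq_setOf φ (fun u => (G.reduce S).Adj w u) _ hstar] at hpcf
    have h1 : 1 ≤ N'.ncard := (Set.ncard_pos (Set.toFinite _)).mpr hne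
    by_cases hw'N : w' ∈ N'
    · rw [Set.insert_eq_self.mpr hw'N] at hpcf
      have h2 : 1 ≤ min 2 N'.ncard := le_min (by omega) h1
      exact Set.nonempty_of_ncard_ne_zero (by omega)
    · have hins : (insert w' N').ncard = N'.ncard + 1 :=
        Set.ncard_insert_of_notMem hw'N (Set.toFinite _)
      have h2 : 2 ≤ (uq φ (insert w' N')).ncard := by
        have hmin : min 2 (insert w' N').ncard = 2 := by rw [hins]; omega
        omega
      exact UA_from_star φ N' w' h2
  rw [hNw, uq_setOf ψ (fun u => G.Adj w u) _ hNw]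
  exact pendant_ok φ ψ N' s a hsN hagreeN hψs hUA ha

end PCFtmp

set_option maxHeartbeats 2000000 in
open PCFtmp in
theorem reduce_triangle_all_four_vertices {V : Type*} [Fintype V]
    (G : SimpleGraph V)
    (hΔ : ∀ u : V, {w | G.Adj u w}.ncard ≤ 4)
    (x y z x₁ x₂ y₁ y₂ z₁ z₂ : V)
    (hxy : G.Adj x y) (hyz : G.Adj y z) (hxz : G.Adj x z)
    (hdx : {w | G.Adj x w}.ncard = 4)
    (hdy : {w | G.Adj y w}.ncard = 4)
    (hdz : {w | G.Adj z w}.ncard = 4)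
    (hxx₁ : G.Adj x x₁) (hxx₂ : G.Adj x x₂)
    (hyy₁ : G.Adj y y₁) (hyy₂ : G.Adj y y₂)
    (hzz₁ : G.Adj z z₁) (hzz₂ : G.Adj z z₂)
    (hdist : List.Pairwise (· ≠ ·) [x, y, z, x₁, x₂, y₁, y₂, z₁, z₂])
    (h : (G.reduce {x, y, z}).HasPCFColoring 2 9) :
    G.HasPCFColoring 2 9 := by
  classical
  obtain ⟨φ, hφprop, hφpcf⟩ := h
  simp only [List.pairwise_cons, List.mem_cons, List.not_mem_nil, List.mem_singleton,
    forall_eq_or_imp, forall_eq, List.Pairwise.nil, and_true,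
    IsEmpty.forall_iff, implies_true, true_and] at hdist
  obtain ⟨⟨nxy, nxz, nxx₁, nxx₂, nxy₁, nxy₂, nxz₁, nxz₂⟩,
    ⟨nyz, nyx₁, nyx₂, nyy₁, nyy₂, nyz₁, nyz₂⟩,
    ⟨nzx₁, nzx₂, nzy₁, nzy₂, nzz₁, nzz₂⟩,
    ⟨nx₁x₂, nx₁y₁, nx₁y₂, nx₁z₁, nx₁z₂⟩,
    ⟨nx₂y₁, nx₂y₂, nx₂z₁, nx₂z₂⟩,
    ⟨ny₁y₂, ny₁z₁, ny₁z₂⟩, ⟨ny₂z₁, ny₂z₂⟩, nz₁z₂⟩ := hdist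
  have hx₁S : x₁ ∉ ({x, y, z} : Set V) := by
    simp only [Set.mem_insert_iff, Set.mem_singleton_iff]
    push_neg
    exact ⟨nxx₁.symm, nyx₁.symm, nzx₁.symm⟩
  have hx₂S : x₂ ∉ ({x, y, z} : Set V) := by
    simp only [Set.mem_insert_iff, Set.mem_singleton_iff]
    push_neg
    exact ⟨nxx₂.symm, nyx₂.symm, nzx₂.symm⟩
  have hy₁S : y₁ ∉ ({x, y, z} : Set V) := by
    simp only [Set.mem_insert_iff, Set.mem_singleton_iff]
    push_neg
    exact ⟨nxy₁.symm, nyy₁.symm, nzy₁.symm⟩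
  have hy₂S : y₂ ∉ ({x, y, z} : Set V) := by
    simp only [Set.mem_insert_iff, Set.mem_singleton_iff]
    push_neg
    exact ⟨nxy₂.symm, nyy₂.symm, nzy₂.symm⟩
  have hz₁S : z₁ ∉ ({x, y, z} : Set V) := by
    simp only [Set.mem_insert_iff, Set.mem_singleton_iff]
    push_neg
    exact ⟨nxz₁.symm, nyz₁.symm, nzz₁.symm⟩
  have hz₂S : z₂ ∉ ({x, y, z} : Set V) := by
    simp only [Set.mem_insert_iff, Set.mem_singleton_iff]
    push_neg
    exact ⟨nxz₂.symm, nyz₂.symm, nzz₂.symm⟩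
  have hNxEq : {u | G.Adj x u} = ({y, z, x₁, x₂} : Set V) := by
    have hsub : ({y, z, x₁, x₂} : Set V) ⊆ {u | G.Adj x u} := by
      intro u hu
      simp only [Set.mem_insert_iff, Set.mem_singleton_iff] at hu
      rcases hu with rfl | rfl | rfl | rfl
      exacts [hxy, hxz, hxx₁, hxx₂]
    have hc4 : ({y, z, x₁, x₂} : Set V).ncard = 4 := by
      rw [Set.ncard_insert_of_notMem (by simp [nyz, nyx₁, nyx₂]) (Set.toFinite _),
        Set.ncard_insert_of_notMem (by simp [nzx₁, nzx₂]) (Set.toFinite _),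
        Set.ncard_insert_of_notMem (by simp [nx₁x₂]) (Set.toFinite _), Set.ncard_singleton]
    exact (Set.eq_of_subset_of_ncard_le hsub (le_of_eq (hdx.trans hc4.symm))
      (Set.toFinite _)).symm
  have hNyEq : {u | G.Adj y u} = ({x, z, y₁, y₂} : Set V) := by
    have hsub : ({x, z, y₁, y₂} : Set V) ⊆ {u | G.Adj y u} := by
      intro u hu
      simp only [Set.mem_insert_iff, Set.mem_singleton_iff] at hu
      rcases hu with rfl | rfl | rfl | rfl
      exacts [hxy.symm, hyz, hyy₁, hyy₂]
    have hc4 : ({x, z, y₁, y₂} : Set V).ncard = 4 := by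
      rw [Set.ncard_insert_of_notMem (by simp [nxz, nxy₁, nxy₂]) (Set.toFinite _),
        Set.ncard_insert_of_notMem (by simp [nzy₁, nzy₂]) (Set.toFinite _),
        Set.ncard_insert_of_notMem (by simp [ny₁y₂]) (Set.toFinite _), Set.ncard_singleton]
    exact (Set.eq_of_subset_of_ncard_le hsub (le_of_eq (hdy.trans hc4.symm))
      (Set.toFinite _)).symm
  have hNzEq : {u | G.Adj z u} = ({x, y, z₁, z₂} : Set V) := by
    have hsub : ({x, y, z₁, z₂} : Set V) ⊆ {u | G.Adj z u} := by
      intro u hu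
      simp only [Set.mem_insert_iff, Set.mem_singleton_iff] at hu
      rcases hu with rfl | rfl | rfl | rfl
      exacts [hxz.symm, hyz.symm, hzz₁, hzz₂]
    have hc4 : ({x, y, z₁, z₂} : Set V).ncard = 4 := by
      rw [Set.ncard_insert_of_notMem (by simp [nxy, nxz₁, nxz₂]) (Set.toFinite _),
        Set.ncard_insert_of_notMem (by simp [nyz₁, nyz₂]) (Set.toFinite _),
        Set.ncard_insert_of_notMem (by simp [nz₁z₂]) (Set.toFinite _), Set.ncard_singleton]
    exact (Set.eq_of_subset_of_ncard_le hsub (le_of_eq (hdz.trans hc4.symm))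
      (Set.toFinite _)).symm
  have hNsx : ∀ u, G.Adj x u → u ∈ ({x, y, z} : Set V) ∨ u = x₁ ∨ u = x₂ := by
    intro u hu
    have hm : u ∈ ({y, z, x₁, x₂} : Set V) := by rw [← hNxEq]; exact hu
    simp only [Set.mem_insert_iff, Set.mem_singleton_iff] at hm
    rcases hm with rfl | rfl | rfl | rfl
    · exact Or.inl (Or.inr (Or.inl rfl))
    · exact Or.inl (Or.inr (Or.inr rfl))
    · exact Or.inr (Or.inl rfl)
    · exact Or.inr (Or.inr rfl)
  have hNsx' : ∀ u, G.Adj x u → u ∈ ({x, y, z} : Set V) ∨ u = x₂ ∨ u = x₁ := by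
    intro u hu
    rcases hNsx u hu with h | h | h
    · exact Or.inl h
    · exact Or.inr (Or.inr h)
    · exact Or.inr (Or.inl h)
  have hNsy : ∀ u, G.Adj y u → u ∈ ({x, y, z} : Set V) ∨ u = y₁ ∨ u = y₂ := by
    intro u hu
    have hm : u ∈ ({x, z, y₁, y₂} : Set V) := by rw [← hNyEq]; exact hu
    simp only [Set.mem_insert_iff, Set.mem_singleton_iff] at hm
    rcases hm with rfl | rfl | rfl | rfl
    · exact Or.inl (Or.inl rfl)
    · exact Or.inl (Or.inr (Or.inr rfl))
    · exact Or.inr (Or.inl rfl)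
    · exact Or.inr (Or.inr rfl)
  have hNsy' : ∀ u, G.Adj y u → u ∈ ({x, y, z} : Set V) ∨ u = y₂ ∨ u = y₁ := by
    intro u hu
    rcases hNsy u hu with h | h | h
    · exact Or.inl h
    · exact Or.inr (Or.inr h)
    · exact Or.inr (Or.inl h)
  have hNsz : ∀ u, G.Adj z u → u ∈ ({x, y, z} : Set V) ∨ u = z₁ ∨ u = z₂ := by
    intro u hu
    have hm : u ∈ ({x, y, z₁, z₂} : Set V) := by rw [← hNzEq]; exact hu
    simp only [Set.mem_insert_iff, Set.mem_singleton_iff] at hm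
    rcases hm with rfl | rfl | rfl | rfl
    · exact Or.inl (Or.inl rfl)
    · exact Or.inl (Or.inr (Or.inl rfl))
    · exact Or.inr (Or.inl rfl)
    · exact Or.inr (Or.inr rfl)
  have hNsz' : ∀ u, G.Adj z u → u ∈ ({x, y, z} : Set V) ∨ u = z₂ ∨ u = z₁ := by
    intro u hu
    rcases hNsz u hu with h | h | h
    · exact Or.inl h
    · exact Or.inr (Or.inr h)
    · exact Or.inr (Or.inl h)
  have honlyx₁ : ∀ t ∈ ({x, y, z} : Set V), G.Adj x₁ t → t = x := by
    intro t ht hadj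
    simp only [Set.mem_insert_iff, Set.mem_singleton_iff] at ht
    rcases ht with rfl | rfl | rfl
    · rfl
    · exfalso
      have hm : x₁ ∈ ({x, z, y₁, y₂} : Set V) := by rw [← hNyEq]; exact hadj.symm
      simp only [Set.mem_insert_iff, Set.mem_singleton_iff] at hm
      rcases hm with h | h | h | h
      exacts [nxx₁ h.symm, nzx₁ h.symm, nx₁y₁ h, nx₁y₂ h]
    · exfalso
      have hm : x₁ ∈ ({x, y, z₁, z₂} : Set V) := by rw [← hNzEq]; exact hadj.symm
      simp only [Set.mem_insert_iff, Set.mem_singleton_iff] at hm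
      rcases hm with h | h | h | h
      exacts [nxx₁ h.symm, nyx₁ h.symm, nx₁z₁ h, nx₁z₂ h]
  have honlyx₂ : ∀ t ∈ ({x, y, z} : Set V), G.Adj x₂ t → t = x := by
    intro t ht hadj
    simp only [Set.mem_insert_iff, Set.mem_singleton_iff] at ht
    rcases ht with rfl | rfl | rfl
    · rfl
    · exfalso
      have hm : x₂ ∈ ({x, z, y₁, y₂} : Set V) := by rw [← hNyEq]; exact hadj.symm
      simp only [Set.mem_insert_iff, Set.mem_singleton_iff] at hm
      rcases hm with h | h | h | h
      exacts [nxx₂ h.symm, nzx₂ h.symm, nx₂y₁ h, nx₂y₂ h]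
    · exfalso
      have hm : x₂ ∈ ({x, y, z₁, z₂} : Set V) := by rw [← hNzEq]; exact hadj.symm
      simp only [Set.mem_insert_iff, Set.mem_singleton_iff] at hm
      rcases hm with h | h | h | h
      exacts [nxx₂ h.symm, nyx₂ h.symm, nx₂z₁ h, nx₂z₂ h]
  have honlyy₁ : ∀ t ∈ ({x, y, z} : Set V), G.Adj y₁ t → t = y := by
    intro t ht hadj
    simp only [Set.mem_insert_iff, Set.mem_singleton_iff] at ht
    rcases ht with rfl | rfl | rfl
    · exfalso
      have hm : y₁ ∈ ({y, z, x₁, x₂} : Set V) := by rw [← hNxEq]; exact hadj.symm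
      simp only [Set.mem_insert_iff, Set.mem_singleton_iff] at hm
      rcases hm with h | h | h | h
      exacts [nyy₁ h.symm, nzy₁ h.symm, nx₁y₁ h.symm, nx₂y₁ h.symm]
    · rfl
    · exfalso
      have hm : y₁ ∈ ({x, y, z₁, z₂} : Set V) := by rw [← hNzEq]; exact hadj.symm
      simp only [Set.mem_insert_iff, Set.mem_singleton_iff] at hm
      rcases hm with h | h | h | h
      exacts [nxy₁ h.symm, nyy₁ h.symm, ny₁z₁ h, ny₁z₂ h]
  have honlyy₂ : ∀ t ∈ ({x, y, z} : Set V), G.Adj y₂ t → t = y := by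
    intro t ht hadj
    simp only [Set.mem_insert_iff, Set.mem_singleton_iff] at ht
    rcases ht with rfl | rfl | rfl
    · exfalso
      have hm : y₂ ∈ ({y, z, x₁, x₂} : Set V) := by rw [← hNxEq]; exact hadj.symm
      simp only [Set.mem_insert_iff, Set.mem_singleton_iff] at hm
      rcases hm with h | h | h | h
      exacts [nyy₂ h.symm, nzy₂ h.symm, nx₁y₂ h.symm, nx₂y₂ h.symm]
    · rfl
    · exfalso
      have hm : y₂ ∈ ({x, y, z₁, z₂} : Set V) := by rw [← hNzEq]; exact hadj.symm
      simp only [Set.mem_insert_iff, Set.mem_singleton_iff] at hm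
      rcases hm with h | h | h | h
      exacts [nxy₂ h.symm, nyy₂ h.symm, ny₂z₁ h, ny₂z₂ h]
  have honlyz₁ : ∀ t ∈ ({x, y, z} : Set V), G.Adj z₁ t → t = z := by
    intro t ht hadj
    simp only [Set.mem_insert_iff, Set.mem_singleton_iff] at ht
    rcases ht with rfl | rfl | rfl
    · exfalso
      have hm : z₁ ∈ ({y, z, x₁, x₂} : Set V) := by rw [← hNxEq]; exact hadj.symm
      simp only [Set.mem_insert_iff, Set.mem_singleton_iff] at hm
      rcases hm with h | h | h | h
      exacts [nyz₁ h.symm, nzz₁ h.symm, nx₁z₁ h.symm, nx₂z₁ h.symm]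
    · exfalso
      have hm : z₁ ∈ ({x, z, y₁, y₂} : Set V) := by rw [← hNyEq]; exact hadj.symm
      simp only [Set.mem_insert_iff, Set.mem_singleton_iff] at hm
      rcases hm with h | h | h | h
      exacts [nxz₁ h.symm, nzz₁ h.symm, ny₁z₁ h.symm, ny₂z₁ h.symm]
    · rfl
  have honlyz₂ : ∀ t ∈ ({x, y, z} : Set V), G.Adj z₂ t → t = z := by
    intro t ht hadj
    simp only [Set.mem_insert_iff, Set.mem_singleton_iff] at ht
    rcases ht with rfl | rfl | rfl
    · exfalso
      have hm : z₂ ∈ ({y, z, x₁, x₂} : Set V) := by rw [← hNxEq]; exact hadj.symm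
      simp only [Set.mem_insert_iff, Set.mem_singleton_iff] at hm
      rcases hm with h | h | h | h
      exacts [nyz₂ h.symm, nzz₂ h.symm, nx₁z₂ h.symm, nx₂z₂ h.symm]
    · exfalso
      have hm : z₂ ∈ ({x, z, y₁, y₂} : Set V) := by rw [← hNyEq]; exact hadj.symm
      simp only [Set.mem_insert_iff, Set.mem_singleton_iff] at hm
      rcases hm with h | h | h | h
      exacts [nxz₂ h.symm, nzz₂ h.symm, ny₁z₂ h.symm, ny₂z₂ h.symm]
    · rfl
  have hpx : φ x₁ ≠ φ x₂ := hφprop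
    ⟨hx₁S, hx₂S, nx₁x₂, Or.inr ⟨x, Or.inl rfl, hxx₁.symm, hxx₂⟩⟩
  have hpy : φ y₁ ≠ φ y₂ := hφprop
    ⟨hy₁S, hy₂S, ny₁y₂, Or.inr ⟨y, Or.inr (Or.inl rfl), hyy₁.symm, hyy₂⟩⟩
  have hpz : φ z₁ ≠ φ z₂ := hφprop
    ⟨hz₁S, hz₂S, nz₁z₂, Or.inr ⟨z, Or.inr (Or.inr rfl), hzz₁.symm, hzz₂⟩⟩
  set Nx₁ : Set V := {u | G.Adj x₁ u} \ {x} with hNx₁def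
  set Nx₂ : Set V := {u | G.Adj x₂ u} \ {x} with hNx₂def
  set Ny₁ : Set V := {u | G.Adj y₁ u} \ {y} with hNy₁def
  set Ny₂ : Set V := {u | G.Adj y₂ u} \ {y} with hNy₂def
  set Nz₁ : Set V := {u | G.Adj z₁ u} \ {z} with hNz₁def
  set Nz₂ : Set V := {u | G.Adj z₂ u} \ {z} with hNz₂def
  have hcard : ∀ (w s : V), G.Adj w s →
      ({u | G.Adj w u} \ {s}).ncard ≤ 3 := by
    intro w s hws
    have h4 := hΔ w
    have h1 : {u | G.Adj w u} = insert s ({u | G.Adj w u} \ {s}) := by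
      have h2 : insert s ({u | G.Adj w u} \ {s}) = {u | G.Adj w u} := by
        rw [Set.insert_diff_singleton]
        exact Set.insert_eq_self.mpr (show G.Adj w s from hws)
      exact h2.symm
    rw [h1, Set.ncard_insert_of_notMem (fun hh => hh.2 rfl) (Set.toFinite _)] at h4
    omega
  set BadX : Set (Fin 9) :=
    (if 3 ≤ (uq φ Nx₁).ncard then (∅ : Set (Fin 9)) else φ '' Nx₁) ∪
    (if 3 ≤ (uq φ Nx₂).ncard then (∅ : Set (Fin 9)) else φ '' Nx₂) ∪
    {φ x₁, φ x₂} with hBadXdef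
  set BadY : Set (Fin 9) :=
    (if 3 ≤ (uq φ Ny₁).ncard then (∅ : Set (Fin 9)) else φ '' Ny₁) ∪
    (if 3 ≤ (uq φ Ny₂).ncard then (∅ : Set (Fin 9)) else φ '' Ny₂) ∪
    {φ y₁, φ y₂} with hBadYdef
  set BadZ : Set (Fin 9) :=
    (if 3 ≤ (uq φ Nz₁).ncard then (∅ : Set (Fin 9)) else φ '' Nz₁) ∪
    (if 3 ≤ (uq φ Nz₂).ncard then (∅ : Set (Fin 9)) else φ '' Nz₂) ∪
    {φ z₁, φ z₂} with hBadZdef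
  have hBadcard : ∀ (B1 B2 : Set (Fin 9)) (p q : Fin 9), B1.ncard ≤ 2 → B2.ncard ≤ 2 →
      (B1 ∪ B2 ∪ {p, q}).ncard ≤ 6 := by
    intro B1 B2 p q h1 h2
    have h3 := Set.ncard_union_le (B1 ∪ B2) ({p, q} : Set (Fin 9))
    have h4 := Set.ncard_union_le B1 B2
    have h5 := pair_ncard_le_two p q
    omega
  have hBX : BadX.ncard ≤ 6 := hBadcard _ _ _ _
    (bad_card_le φ Nx₁ (hcard x₁ x hxx₁.symm)) (bad_card_le φ Nx₂ (hcard x₂ x hxx₂.symm))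
  have hBY : BadY.ncard ≤ 6 := hBadcard _ _ _ _
    (bad_card_le φ Ny₁ (hcard y₁ y hyy₁.symm)) (bad_card_le φ Ny₂ (hcard y₂ y hyy₂.symm))
  have hBZ : BadZ.ncard ≤ 6 := hBadcard _ _ _ _
    (bad_card_le φ Nz₁ (hcard z₁ z hzz₁.symm)) (bad_card_le φ Nz₂ (hcard z₂ z hzz₂.symm))
  obtain ⟨a, b, c, haA, hbB, hcC, hab, hac, hbc, hKP, hKQ, hKR⟩ :=
    sel BadX BadY BadZ {φ x₁, φ x₂} {φ y₁, φ y₂} {φ z₁, φ z₂} hBX hBY hBZ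
      (pair_ncard_le_two _ _) (pair_ncard_le_two _ _) (pair_ncard_le_two _ _)
      (by
        intro t ht
        rcases ht with rfl | ht
        · exact Or.inr (Or.inl rfl)
        · rw [Set.mem_singleton_iff] at ht
          subst ht
          exact Or.inr (Or.inr rfl))
  have hφx₁B : φ x₁ ∈ BadX := Or.inr (Or.inl rfl)
  have hφx₂B : φ x₂ ∈ BadX := Or.inr (Or.inr rfl)
  have hφy₁B : φ y₁ ∈ BadY := Or.inr (Or.inl rfl)
  have hφy₂B : φ y₂ ∈ BadY := Or.inr (Or.inr rfl)
  have hφz₁B : φ z₁ ∈ BadZ := Or.inr (Or.inl rfl)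
  have hφz₂B : φ z₂ ∈ BadZ := Or.inr (Or.inr rfl)
  set ψ : V → Fin 9 := fun v => if v = x then a else if v = y then b else if v = z then c else φ v
    with hψdef
  have hψx : ψ x = a := by simp [hψdef]
  have hψy : ψ y = b := by simp [hψdef, nxy.symm]
  have hψz : ψ z = c := by simp [hψdef, nxz.symm, nyz.symm]
  have hψu : ∀ u, u ∉ ({x, y, z} : Set V) → ψ u = φ u := by
    intro u hu
    simp only [Set.mem_insert_iff, Set.mem_singleton_iff] at hu
    push_neg at hu
    simp [hψdef, hu.1, hu.2.1, hu.2.2]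
  have hψx₁ : ψ x₁ = φ x₁ := hψu x₁ hx₁S
  have hψx₂ : ψ x₂ = φ x₂ := hψu x₂ hx₂S
  have hψy₁ : ψ y₁ = φ y₁ := hψu y₁ hy₁S
  have hψy₂ : ψ y₂ = φ y₂ := hψu y₂ hy₂S
  have hψz₁ : ψ z₁ = φ z₁ := hψu z₁ hz₁S
  have hψz₂ : ψ z₂ = φ z₂ := hψu z₂ hz₂S
  have keyx : ∀ w', G.Adj x w' → ψ x ≠ ψ w' := by
    intro w' hw'
    have hm : w' ∈ ({y, z, x₁, x₂} : Set V) := by rw [← hNxEq]; exact hw'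
    simp only [Set.mem_insert_iff, Set.mem_singleton_iff] at hm
    rcases hm with rfl | rfl | rfl | rfl
    · rw [hψx, hψy]; exact hab
    · rw [hψx, hψz]; exact hac
    · rw [hψx, hψx₁]; intro hh; exact haA (hh ▸ hφx₁B)
    · rw [hψx, hψx₂]; intro hh; exact haA (hh ▸ hφx₂B)
  have keyy : ∀ w', G.Adj y w' → ψ y ≠ ψ w' := by
    intro w' hw'
    have hm : w' ∈ ({x, z, y₁, y₂} : Set V) := by rw [← hNyEq]; exact hw'
    simp only [Set.mem_insert_iff, Set.mem_singleton_iff] at hm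
    rcases hm with rfl | rfl | rfl | rfl
    · rw [hψx, hψy]; exact hab.symm
    · rw [hψy, hψz]; exact hbc
    · rw [hψy, hψy₁]; intro hh; exact hbB (hh ▸ hφy₁B)
    · rw [hψy, hψy₂]; intro hh; exact hbB (hh ▸ hφy₂B)
  have keyz : ∀ w', G.Adj z w' → ψ z ≠ ψ w' := by
    intro w' hw'
    have hm : w' ∈ ({x, y, z₁, z₂} : Set V) := by rw [← hNzEq]; exact hw'
    simp only [Set.mem_insert_iff, Set.mem_singleton_iff] at hm
    rcases hm with rfl | rfl | rfl | rfl
    · rw [hψx, hψz]; exact hac.symm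
    · rw [hψy, hψz]; exact hbc.symm
    · rw [hψz, hψz₁]; intro hh; exact hcC (hh ▸ hφz₁B)
    · rw [hψz, hψz₂]; intro hh; exact hcC (hh ▸ hφz₂B)
  refine ⟨ψ, ?_, ?_⟩
  · intro u w hadj
    by_cases hux : u = x
    · subst hux; exact keyx w hadj
    by_cases hwx : w = x
    · subst hwx; exact (keyx u hadj.symm).symm
    by_cases huy : u = y
    · subst huy; exact keyy w hadj
    by_cases hwy : w = y
    · subst hwy; exact (keyy u hadj.symm).symm
    by_cases huz : u = z
    · subst huz; exact keyz w hadj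
    by_cases hwz : w = z
    · subst hwz; exact (keyz u hadj.symm).symm
    have huS : u ∉ ({x, y, z} : Set V) := by
      simp only [Set.mem_insert_iff, Set.mem_singleton_iff]
      push_neg
      exact ⟨hux, huy, huz⟩
    have hwS : w ∉ ({x, y, z} : Set V) := by
      simp only [Set.mem_insert_iff, Set.mem_singleton_iff]
      push_neg
      exact ⟨hwx, hwy, hwz⟩
    rw [hψu u huS, hψu w hwS]
    exact hφprop ⟨huS, hwS, hadj.ne, Or.inl hadj⟩
  · intro v
    by_cases hvx : v = x
    · rw [hvx]
      rw [show {u | G.Adj x u} = ({y, z, x₁, x₂} : Set V) from hNxEq,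
        uq_setOf ψ (fun u => G.Adj x u) _ hNxEq]
      refine le_trans (min_le_left _ _) ?_
      refine four_uniq ψ y z x₁ x₂ nyz nyx₁ nyx₂ nzx₁ nzx₂ nx₁x₂ ?_ ?_ ?_
      · rw [hψy, hψz]; exact hbc
      · rw [hψx₁, hψx₂]; exact hpx
      · rw [hψy, hψz, hψx₁, hψx₂]
        intro hh
        exact hKP ⟨by rcases hh.1 with h | h; exacts [Or.inl h, Or.inr h],
          by rcases hh.2 with h | h; exacts [Or.inl h, Or.inr h]⟩
    by_cases hvy : v = y
    · rw [hvy]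
      rw [show {u | G.Adj y u} = ({x, z, y₁, y₂} : Set V) from hNyEq,
        uq_setOf ψ (fun u => G.Adj y u) _ hNyEq]
      refine le_trans (min_le_left _ _) ?_
      refine four_uniq ψ x z y₁ y₂ nxz nxy₁ nxy₂ nzy₁ nzy₂ ny₁y₂ ?_ ?_ ?_
      · rw [hψx, hψz]; exact hac
      · rw [hψy₁, hψy₂]; exact hpy
      · rw [hψx, hψz, hψy₁, hψy₂]
        intro hh
        exact hKQ ⟨by rcases hh.1 with h | h; exacts [Or.inl h, Or.inr h],
          by rcases hh.2 with h | h; exacts [Or.inl h, Or.inr h]⟩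
    by_cases hvz : v = z
    · rw [hvz]
      rw [show {u | G.Adj z u} = ({x, y, z₁, z₂} : Set V) from hNzEq,
        uq_setOf ψ (fun u => G.Adj z u) _ hNzEq]
      refine le_trans (min_le_left _ _) ?_
      refine four_uniq ψ x y z₁ z₂ nxy nxz₁ nxz₂ nyz₁ nyz₂ nz₁z₂ ?_ ?_ ?_
      · rw [hψx, hψy]; exact hab
      · rw [hψz₁, hψz₂]; exact hpz
      · rw [hψx, hψy, hψz₁, hψz₂]
        intro hh
        exact hKR ⟨by rcases hh.1 with h | h; exacts [Or.inl h, Or.inr h],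
          by rcases hh.2 with h | h; exacts [Or.inl h, Or.inr h]⟩
    by_cases hvx₁ : v = x₁
    · rw [hvx₁]
      exact pendant_main G {x, y, z} φ ψ x x₁ x₂ a (Or.inl rfl) hxx₁ hxx₂ hNsx
        hx₁S hx₂S nx₁x₂ honlyx₁ (hφpcf x₁) hψx hψu
        (fun hh => haA (Or.inl (Or.inl hh)))
    by_cases hvx₂ : v = x₂
    · rw [hvx₂]
      exact pendant_main G {x, y, z} φ ψ x x₂ x₁ a (Or.inl rfl) hxx₂ hxx₁ hNsx'
        hx₂S hx₁S nx₁x₂.symm honlyx₂ (hφpcf x₂) hψx hψu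
        (fun hh => haA (Or.inl (Or.inr hh)))
    by_cases hvy₁ : v = y₁
    · rw [hvy₁]
      exact pendant_main G {x, y, z} φ ψ y y₁ y₂ b (Or.inr (Or.inl rfl)) hyy₁ hyy₂ hNsy
        hy₁S hy₂S ny₁y₂ honlyy₁ (hφpcf y₁) hψy hψu
        (fun hh => hbB (Or.inl (Or.inl hh)))
    by_cases hvy₂ : v = y₂
    · rw [hvy₂]
      exact pendant_main G {x, y, z} φ ψ y y₂ y₁ b (Or.inr (Or.inl rfl)) hyy₂ hyy₁ hNsy'
        hy₂S hy₁S ny₁y₂.symm honlyy₂ (hφpcf y₂) hψy hψu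
        (fun hh => hbB (Or.inl (Or.inr hh)))
    by_cases hvz₁ : v = z₁
    · rw [hvz₁]
      exact pendant_main G {x, y, z} φ ψ z z₁ z₂ c (Or.inr (Or.inr rfl)) hzz₁ hzz₂ hNsz
        hz₁S hz₂S nz₁z₂ honlyz₁ (hφpcf z₁) hψz hψu
        (fun hh => hcC (Or.inl (Or.inl hh)))
    by_cases hvz₂ : v = z₂
    · rw [hvz₂]
      exact pendant_main G {x, y, z} φ ψ z z₂ z₁ c (Or.inr (Or.inr rfl)) hzz₂ hzz₁ hNsz'
        hz₂S hz₁S nz₁z₂.symm honlyz₂ (hφpcf z₂) hψz hψu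
        (fun hh => hcC (Or.inl (Or.inr hh)))
    have hvS : v ∉ ({x, y, z} : Set V) := by
      simp only [Set.mem_insert_iff, Set.mem_singleton_iff]
      push_neg
      exact ⟨hvx, hvy, hvz⟩
    have hfar : ∀ t ∈ ({x, y, z} : Set V), ¬ G.Adj v t := by
      intro t ht hadj
      simp only [Set.mem_insert_iff, Set.mem_singleton_iff] at ht
      rcases ht with rfl | rfl | rfl
      · have hm : v ∈ ({y, z, x₁, x₂} : Set V) := by rw [← hNxEq]; exact hadj.symm
        simp only [Set.mem_insert_iff, Set.mem_singleton_iff] at hm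
        rcases hm with rfl | rfl | rfl | rfl
        exacts [hvy rfl, hvz rfl, hvx₁ rfl, hvx₂ rfl]
      · have hm : v ∈ ({x, z, y₁, y₂} : Set V) := by rw [← hNyEq]; exact hadj.symm
        simp only [Set.mem_insert_iff, Set.mem_singleton_iff] at hm
        rcases hm with rfl | rfl | rfl | rfl
        exacts [hvx rfl, hvz rfl, hvy₁ rfl, hvy₂ rfl]
      · have hm : v ∈ ({x, y, z₁, z₂} : Set V) := by rw [← hNzEq]; exact hadj.symm
        simp only [Set.mem_insert_iff, Set.mem_singleton_iff] at hm
        rcases hm with rfl | rfl | rfl | rfl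
        exacts [hvx rfl, hvy rfl, hvz₁ rfl, hvz₂ rfl]
    have hred : {u | (G.reduce {x, y, z}).Adj v u} = {u | G.Adj v u} :=
      reduce_nbhd_far G {x, y, z} v hvS hfar
    have hp := hφpcf v
    rw [hred, uq_setOf φ (fun u => (G.reduce {x, y, z}).Adj v u) _ hred] at hp
    have hagreeN : ∀ u ∈ {u | G.Adj v u}, ψ u = φ u := by
      intro u hu
      refine hψu u ?_
      intro huS
      exact hfar u huS hu
    have huqeq : uq ψ {u | G.Adj v u} = uq φ {u | G.Adj v u} := by
      ext c'
      show cnt ψ _ c' = 1 ↔ cnt φ _ c' = 1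
      rw [cnt_congr hagreeN c']
    rw [uq_setOf ψ (fun u => G.Adj v u) {u | G.Adj v u} rfl, huqeq]
    exact hp
end
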